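/- Let V be a real Banach space and T : V → V a firmly nonexpansive map with escape rate τ = 0, and suppose ‖T^{n+1}0 - Tⁿ0‖ → 0 as n → ∞. If h is a pointwise limit along a subsequence of the functions x ↦ ‖x - Tⁿ0‖ - ‖Tⁿ0‖, then h(Tx) ≤ h(x) for all x ∈ V. -/

import Mathlib

open Filter Topology

theorem firmly_nonexpansive_subinvariant {V : Type*} [NormedAddCommGroup V]
    [NormedSpace ℝ V] [CompleteSpace V] (T : V → V)
    (hfirm : ∀ x y : V, ∀ t : ℝ, 0 ≤ t →
      ‖T x - T y‖ ≤ ‖(1 - t) • (T x - T y) + t • (x - y)‖)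
    (hτ : Tendsto (fun n : ℕ => ‖T^[n] 0‖ / n) atTop (𝓝 (0 : ℝ)))
    (hstep : Tendsto (fun n : ℕ => ‖T^[n + 1] 0 - T^[n] 0‖) atTop (𝓝 (0 : ℝ)))
    (φ : ℕ → ℕ) (hφ : StrictMono φ) (h : V → ℝ)
    (hlim : ∀ x : V, Tendsto (fun i => ‖x - T^[φ i] 0‖ - ‖T^[φ i] 0‖) atTop (𝓝 (h x))) :
    ∀ x : V, h (T x) ≤ h x := by
  -- T is nonexpansive (take t = 1 in firmness)
  have hne : ∀ x y : V, ‖T x - T y‖ ≤ ‖x - y‖ := by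
    intro x y
    have := hfirm x y 1 (by norm_num)
    simpa using this
  intro x
  -- the step sizes along the subsequence tend to 0
  have hstepφ : Tendsto (fun i => ‖T^[φ i + 1] 0 - T^[φ i] 0‖) atTop (𝓝 (0 : ℝ)) :=
    hstep.comp hφ.tendsto_atTop
  have hg : Tendsto (fun i => (‖x - T^[φ i] 0‖ - ‖T^[φ i] 0‖) + ‖T^[φ i + 1] 0 - T^[φ i] 0‖)
      atTop (𝓝 (h x)) := by
    simpa using (hlim x).add hstepφ
  refine le_of_tendsto_of_tendsto' (hlim (T x)) hg (fun i => ?_)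
  have key : ‖T x - T^[φ i] 0‖ ≤ ‖x - T^[φ i] 0‖ + ‖T^[φ i + 1] 0 - T^[φ i] 0‖ := by
    calc ‖T x - T^[φ i] 0‖
        ≤ ‖T x - T^[φ i + 1] 0‖ + ‖T^[φ i + 1] 0 - T^[φ i] 0‖ := norm_sub_le_norm_sub_add_norm_sub _ _ _
      _ ≤ ‖x - T^[φ i] 0‖ + ‖T^[φ i + 1] 0 - T^[φ i] 0‖ := by
          have : T^[φ i + 1] 0 = T (T^[φ i] 0) := Function.iterate_succ_apply' T (φ i) 0
          rw [this]
          exact add_le_add_left (hne x (T^[φ i] 0)) _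
  linarith
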